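/- Lower bound on leakage: for finitely supported random variables v, v̂, d, I(v̂; d) ≥ I(v; v̂) + I(v; d) − H(v). -/

import Mathlib

open Finset

variable {Ω : Type*} [Fintype Ω]

/-- Probability that random variable `X` takes value `s`, under mass function `μ`. -/
noncomputable def probOf (μ : Ω → ℝ) {S : Type*} [DecidableEq S] (X : Ω → S) (s : S) : ℝ :=
  ∑ ω ∈ Finset.univ.filter fun ω => X ω = s, μ ω

/-- `μ` is a probability mass function on the finite sample space `Ω`. -/
def IsProbMass (μ : Ω → ℝ) : Prop := (∀ ω, 0 ≤ μ ω) ∧ ∑ ω, μ ω = 1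

/-- Shannon entropy of a finitely supported random variable. -/
noncomputable def entropy (μ : Ω → ℝ) {S : Type*} [Fintype S] [DecidableEq S]
    (X : Ω → S) : ℝ :=
  ∑ s : S, Real.negMulLog (probOf μ X s)

/-- Conditional Shannon entropy `H(X | Y) = H(X, Y) - H(Y)`. -/
noncomputable def condEntropy (μ : Ω → ℝ) {S T : Type*} [Fintype S] [DecidableEq S]
    [Fintype T] [DecidableEq T] (X : Ω → S) (Y : Ω → T) : ℝ :=
  entropy μ (fun ω => (X ω, Y ω)) - entropy μ Y

/-- Mutual information `I(X; Y) = H(X) + H(Y) - H(X, Y)`. -/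
noncomputable def mutualInfo (μ : Ω → ℝ) {S T : Type*} [Fintype S] [DecidableEq S]
    [Fintype T] [DecidableEq T] (X : Ω → S) (Y : Ω → T) : ℝ :=
  entropy μ X + entropy μ Y - entropy μ (fun ω => (X ω, Y ω))

/-- Conditional mutual information `I(X; Y | Z) = H(X,Z) + H(Y,Z) - H(X,Y,Z) - H(Z)`. -/
noncomputable def condMutualInfo (μ : Ω → ℝ) {S T U : Type*} [Fintype S] [DecidableEq S]
    [Fintype T] [DecidableEq T] [Fintype U] [DecidableEq U]
    (X : Ω → S) (Y : Ω → T) (Z : Ω → U) : ℝ :=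
  entropy μ (fun ω => (X ω, Z ω)) + entropy μ (fun ω => (Y ω, Z ω))
    - entropy μ (fun ω => (X ω, Y ω, Z ω)) - entropy μ Z

/-- Independence of two random variables: the joint distribution factorizes. -/
def IndepRV (μ : Ω → ℝ) {S T : Type*} [DecidableEq S] [DecidableEq T]
    (X : Ω → S) (Y : Ω → T) : Prop :=
  ∀ s t, probOf μ (fun ω => (X ω, Y ω)) (s, t) = probOf μ X s * probOf μ Y t

-- lemma A: superadditivity of negMulLog
lemma negMulLog_sum_le {ι : Type*} (s : Finset ι) (f : ι → ℝ) (hf : ∀ i ∈ s, 0 ≤ f i) :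
    Real.negMulLog (∑ i ∈ s, f i) ≤ ∑ i ∈ s, Real.negMulLog (f i) := by
  have hS : 0 ≤ ∑ i ∈ s, f i := Finset.sum_nonneg hf
  rw [Real.negMulLog, neg_mul, Finset.sum_mul, ← Finset.sum_neg_distrib]
  refine Finset.sum_le_sum fun i hi => ?_
  rw [Real.negMulLog, neg_mul, neg_le_neg_iff]
  rcases eq_or_lt_of_le (hf i hi) with h | h
  · simp [← h]
  · exact mul_le_mul_of_nonneg_left
      (Real.log_le_log h (Finset.single_le_sum hf hi)) (hf i hi)

-- lemma B: probOf as sum of indicators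
lemma probOf_eq_sum_ite (μ : Ω → ℝ) {S : Type*} [DecidableEq S] (X : Ω → S) (s : S) :
    probOf μ X s = ∑ ω, if X ω = s then μ ω else 0 := by
  rw [probOf, Finset.sum_filter]

lemma probOf_nonneg (μ : Ω → ℝ) (h : ∀ ω, 0 ≤ μ ω) {S : Type*} [DecidableEq S]
    (X : Ω → S) (s : S) : 0 ≤ probOf μ X s :=
  Finset.sum_nonneg fun ω _ => h ω

-- marginals
lemma probOf_fst (μ : Ω → ℝ) {S T : Type*} [Fintype T] [DecidableEq S] [DecidableEq T]
    (X : Ω → S) (Y : Ω → T) (s : S) :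
    probOf μ X s = ∑ t, probOf μ (fun ω => (X ω, Y ω)) (s, t) := by
  simp only [probOf_eq_sum_ite, Prod.mk.injEq]
  rw [Finset.sum_comm]
  refine Finset.sum_congr rfl fun ω _ => ?_
  by_cases h : X ω = s <;> simp [h]

lemma probOf_snd (μ : Ω → ℝ) {S T : Type*} [Fintype S] [DecidableEq S] [DecidableEq T]
    (X : Ω → S) (Y : Ω → T) (t : T) :
    probOf μ Y t = ∑ s, probOf μ (fun ω => (X ω, Y ω)) (s, t) := by
  simp only [probOf_eq_sum_ite, Prod.mk.injEq]
  rw [Finset.sum_comm]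
  refine Finset.sum_congr rfl fun ω _ => ?_
  by_cases h : Y ω = t <;> simp [h]

lemma probOf_comp_inj (μ : Ω → ℝ) {S T : Type*} [DecidableEq S] [DecidableEq T]
    (X : Ω → S) (g : S → T) (hg : Function.Injective g) (s : S) :
    probOf μ (fun ω => g (X ω)) (g s) = probOf μ X s := by
  unfold probOf
  congr 1
  ext ω
  simp [hg.eq_iff]


lemma slice_ineq {B C : Type*} [Fintype B] [Fintype C] (Q : B → C → ℝ)
    (hQ : ∀ b c, 0 ≤ Q b c) :
    ∑ b, ∑ c, Q b c * (Real.log (∑ c', Q b c') + Real.log (∑ b', Q b' c)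
      - Real.log (∑ b', ∑ c', Q b' c') - Real.log (Q b c)) ≤ 0 := by
  set t : ℝ := ∑ b', ∑ c', Q b' c' with ht
  have hrow : ∀ b, 0 ≤ ∑ c', Q b c' := fun b => Finset.sum_nonneg fun c _ => hQ b c
  have hcol : ∀ c, 0 ≤ ∑ b', Q b' c := fun c => Finset.sum_nonneg fun b _ => hQ b c
  have ht0 : 0 ≤ t := Finset.sum_nonneg fun b _ => hrow b
  have key : ∀ b c, Q b c * (Real.log (∑ c', Q b c') + Real.log (∑ b', Q b' c)
      - Real.log t - Real.log (Q b c)) ≤ (∑ c', Q b c') * (∑ b', Q b' c) / t - Q b c := by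
    intro b c
    rcases eq_or_lt_of_le (hQ b c) with h0 | h0
    · rw [← h0]
      simp only [zero_mul, sub_zero]
      exact div_nonneg (mul_nonneg (hrow b) (hcol c)) ht0
    · have hrb : 0 < ∑ c', Q b c' :=
        lt_of_lt_of_le h0 (Finset.single_le_sum (fun c' _ => hQ b c') (Finset.mem_univ c))
      have hcb : 0 < ∑ b', Q b' c :=
        lt_of_lt_of_le h0 (Finset.single_le_sum (fun b' _ => hQ b' c) (Finset.mem_univ b))
      have htp : 0 < t :=
        lt_of_lt_of_le hrb (Finset.single_le_sum (fun b' _ => hrow b') (Finset.mem_univ b))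
      have hx : 0 < (∑ c', Q b c') * (∑ b', Q b' c) / (t * Q b c) :=
        div_pos (mul_pos hrb hcb) (mul_pos htp h0)
      have hlog : Real.log (∑ c', Q b c') + Real.log (∑ b', Q b' c)
          - Real.log t - Real.log (Q b c)
          = Real.log ((∑ c', Q b c') * (∑ b', Q b' c) / (t * Q b c)) := by
        rw [Real.log_div (by positivity) (by positivity), Real.log_mul hrb.ne' hcb.ne',
          Real.log_mul htp.ne' h0.ne']
        ring
      rw [hlog]
      calc Q b c * Real.log ((∑ c', Q b c') * (∑ b', Q b' c) / (t * Q b c))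
          ≤ Q b c * ((∑ c', Q b c') * (∑ b', Q b' c) / (t * Q b c) - 1) :=
            mul_le_mul_of_nonneg_left (Real.log_le_sub_one_of_pos hx) (hQ b c)
        _ = (∑ c', Q b c') * (∑ b', Q b' c) / t - Q b c := by
            field_simp
  calc ∑ b, ∑ c, Q b c * (Real.log (∑ c', Q b c') + Real.log (∑ b', Q b' c)
        - Real.log t - Real.log (Q b c))
      ≤ ∑ b, ∑ c, ((∑ c', Q b c') * (∑ b', Q b' c) / t - Q b c) :=
        Finset.sum_le_sum fun b _ => Finset.sum_le_sum fun c _ => key b c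
    _ = 0 := by
        rcases eq_or_lt_of_le ht0 with h0 | h0
        · have hz : ∀ b c, Q b c = 0 := by
            intro b c
            have : ∑ b', ∑ c', Q b' c' = 0 := h0.symm
            have hb := (Finset.sum_eq_zero_iff_of_nonneg (fun b' _ => hrow b')).mp this b
              (Finset.mem_univ b)
            exact (Finset.sum_eq_zero_iff_of_nonneg (fun c' _ => hQ b c')).mp hb c
              (Finset.mem_univ c)
          simp [hz]
        · simp only [Finset.sum_sub_distrib]
          rw [← ht]
          have : ∑ b, ∑ c, (∑ c', Q b c') * (∑ b', Q b' c) / t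
              = (∑ b, (∑ c', Q b c') * (∑ c, ∑ b', Q b' c)) / t := by
            rw [Finset.sum_div]
            refine Finset.sum_congr rfl fun b _ => ?_
            rw [Finset.mul_sum, Finset.sum_div]
          rw [this]
          have hcomm : ∑ c, ∑ b', Q b' c = t := Finset.sum_comm
          rw [hcomm, ← Finset.sum_mul, ← ht, mul_div_assoc, div_self h0.ne', mul_one, sub_self]

lemma sum_negMulLog_expand {ι : Type*} (s : Finset ι) (f : ι → ℝ) :
    Real.negMulLog (∑ i ∈ s, f i) = ∑ i ∈ s, -(f i) * Real.log (∑ j ∈ s, f j) := by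
  rw [Real.negMulLog, ← Finset.sum_mul, Finset.sum_neg_distrib]

lemma submod_slice {B C : Type*} [Fintype B] [Fintype C] (Q : B → C → ℝ)
    (hQ : ∀ b c, 0 ≤ Q b c) :
    (∑ b, ∑ c, Real.negMulLog (Q b c)) + Real.negMulLog (∑ b, ∑ c, Q b c)
      ≤ (∑ b, Real.negMulLog (∑ c, Q b c)) + ∑ c, Real.negMulLog (∑ b, Q b c) := by
  have H := slice_ineq Q hQ
  have e1 : Real.negMulLog (∑ b, ∑ c, Q b c)
      = ∑ b, ∑ c, -(Q b c) * Real.log (∑ b', ∑ c', Q b' c') := by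
    rw [sum_negMulLog_expand]
    exact Finset.sum_congr rfl fun b _ => by rw [← Finset.sum_neg_distrib, Finset.sum_mul]
  have e2 : ∀ b, Real.negMulLog (∑ c, Q b c)
      = ∑ c, -(Q b c) * Real.log (∑ c', Q b c') := fun b => sum_negMulLog_expand _ _
  have e3 : (∑ c, Real.negMulLog (∑ b, Q b c))
      = ∑ b, ∑ c, -(Q b c) * Real.log (∑ b', Q b' c) := by
    rw [Finset.sum_comm]
    exact Finset.sum_congr rfl fun c _ => sum_negMulLog_expand _ _
  have e4 : ∀ b c, Real.negMulLog (Q b c) = -(Q b c) * Real.log (Q b c) := fun b c => rfl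
  have key : (∑ b, ∑ c, Real.negMulLog (Q b c)) + Real.negMulLog (∑ b, ∑ c, Q b c)
      - ((∑ b, Real.negMulLog (∑ c, Q b c)) + ∑ c, Real.negMulLog (∑ b, Q b c))
      = ∑ b, ∑ c, Q b c * (Real.log (∑ c', Q b c') + Real.log (∑ b', Q b' c)
        - Real.log (∑ b', ∑ c', Q b' c') - Real.log (Q b c)) := by
    rw [e1, e3]
    simp only [e2, e4]
    rw [← Finset.sum_add_distrib, ← Finset.sum_add_distrib, ← Finset.sum_sub_distrib]
    refine Finset.sum_congr rfl fun b _ => ?_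
    rw [← Finset.sum_add_distrib, ← Finset.sum_add_distrib, ← Finset.sum_sub_distrib]
    exact Finset.sum_congr rfl fun c _ => by ring
  linarith [key ▸ H]


theorem leakage_lower_bound {V VH D : Type*} [Fintype V] [DecidableEq V] [Fintype VH] [DecidableEq VH] [Fintype D] [DecidableEq D] (μ : Ω → ℝ) (hμ : IsProbMass μ) (v : Ω → V) (vh : Ω → VH) (d : Ω → D) :
    mutualInfo μ vh d ≥ mutualInfo μ v vh + mutualInfo μ v d - entropy μ v := by
  set P : V × VH × D → ℝ := probOf μ (fun ω => (v ω, vh ω, d ω)) with hPdef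
  have hP : ∀ p, 0 ≤ P p := fun p => probOf_nonneg μ hμ.1 _ p
  -- entropy identities
  have Htriple : entropy μ (fun ω => (v ω, vh ω, d ω)) = ∑ x, ∑ y, ∑ z, Real.negMulLog (P (x, y, z)) := by
    rw [entropy, Fintype.sum_prod_type]
    exact Finset.sum_congr rfl fun x _ => Fintype.sum_prod_type _
  have Hv : entropy μ v = ∑ x, Real.negMulLog (∑ y, ∑ z, P (x, y, z)) := by
    rw [entropy]
    refine Finset.sum_congr rfl fun x _ => ?_
    rw [probOf_fst μ v (fun ω => (vh ω, d ω)) x, Fintype.sum_prod_type]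
  have Hvhd : entropy μ (fun ω => (vh ω, d ω)) = ∑ y, ∑ z, Real.negMulLog (∑ x, P (x, y, z)) := by
    rw [entropy, Fintype.sum_prod_type]
    refine Finset.sum_congr rfl fun y _ => Finset.sum_congr rfl fun z _ => ?_
    rw [probOf_snd μ v (fun ω => (vh ω, d ω)) (y, z)]
  have Hvvh : entropy μ (fun ω => (v ω, vh ω)) = ∑ x, ∑ y, Real.negMulLog (∑ z, P (x, y, z)) := by
    rw [entropy, Fintype.sum_prod_type]
    refine Finset.sum_congr rfl fun x _ => Finset.sum_congr rfl fun y _ => ?_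
    rw [probOf_fst μ (fun ω => (v ω, vh ω)) d (x, y)]
    refine congrArg Real.negMulLog (Finset.sum_congr rfl fun z _ => ?_)
    have := probOf_comp_inj μ (fun ω => (v ω, vh ω, d ω))
      (fun p : V × VH × D => ((p.1, p.2.1), p.2.2))
      (fun p q h => by
        simp only [Prod.mk.injEq] at h
        exact Prod.ext h.1.1 (Prod.ext h.1.2 h.2)) (x, y, z)
    simpa [hPdef] using this
  have Hvd : entropy μ (fun ω => (v ω, d ω)) = ∑ x, ∑ z, Real.negMulLog (∑ y, P (x, y, z)) := by
    rw [entropy, Fintype.sum_prod_type]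
    refine Finset.sum_congr rfl fun x _ => Finset.sum_congr rfl fun z _ => ?_
    rw [probOf_fst μ (fun ω => (v ω, d ω)) vh (x, z)]
    refine congrArg Real.negMulLog (Finset.sum_congr rfl fun y _ => ?_)
    have := probOf_comp_inj μ (fun ω => (v ω, vh ω, d ω))
      (fun p : V × VH × D => ((p.1, p.2.2), p.2.1))
      (fun p q h => by
        simp only [Prod.mk.injEq] at h
        exact Prod.ext h.1.1 (Prod.ext h.2 h.1.2)) (x, y, z)
    simpa [hPdef] using this
  -- inequality 1 : monotonicity
  have h1 : entropy μ (fun ω => (vh ω, d ω)) ≤ entropy μ (fun ω => (v ω, vh ω, d ω)) := by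
    rw [Hvhd, Htriple]
    calc ∑ y, ∑ z, Real.negMulLog (∑ x, P (x, y, z))
        ≤ ∑ y, ∑ z, ∑ x, Real.negMulLog (P (x, y, z)) :=
          Finset.sum_le_sum fun y _ => Finset.sum_le_sum fun z _ =>
            negMulLog_sum_le _ _ fun x _ => hP _
      _ = ∑ x, ∑ y, ∑ z, Real.negMulLog (P (x, y, z)) :=
          (Finset.sum_congr rfl fun y _ => Finset.sum_comm).trans Finset.sum_comm
  -- inequality 2 : submodularity
  have h2 : entropy μ (fun ω => (v ω, vh ω, d ω)) + entropy μ v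
      ≤ entropy μ (fun ω => (v ω, vh ω)) + entropy μ (fun ω => (v ω, d ω)) := by
    rw [Htriple, Hv, Hvvh, Hvd, ← Finset.sum_add_distrib, ← Finset.sum_add_distrib]
    exact Finset.sum_le_sum fun x _ => submod_slice (fun y z => P (x, y, z)) fun y z => hP _
  simp only [mutualInfo, ge_iff_le]
  linarith
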